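/- (MSB from wrap: Eq. 8.) Let $L = 2^{\ell}$, $\ell \geq 1$, and let $a_1,a_2,a_3 \in [0,L-1]$ with $a = (a_1+a_2+a_3)\bmod L$. Then $\mathrm{MSB}(a) \equiv \mathrm{MSB}(a_1) + \mathrm{MSB}(a_2) + \mathrm{MSB}(a_3) + \mathrm{wrap}_3(2a_1 \bmod L,\; 2a_2 \bmod L,\; 2a_3 \bmod L,\; L) \pmod 2$, and consequently $\mathrm{DReLU}(a) = \mathrm{MSB}(a_1) \oplus \mathrm{MSB}(a_2) \oplus \mathrm{MSB}(a_3) \oplus \mathrm{wrap}_3(2a_1 \bmod L, 2a_2 \bmod L, 2a_3 \bmod L, L) \oplus 1$. -/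

import Mathlib

theorem msb_from_wrap (ℓ : ℕ) (hℓ : 1 ≤ ℓ) (a₁ a₂ a₃ : ℕ)
    (ha₁ : a₁ < 2 ^ ℓ) (ha₂ : a₂ < 2 ^ ℓ) (ha₃ : a₃ < 2 ^ ℓ)
    (a : ℕ) (ha : a = (a₁ + a₂ + a₃) % 2 ^ ℓ)
    (MSB : ℕ → ℕ) (hMSB : ∀ y, MSB y = y / 2 ^ (ℓ - 1))
    (wrap3 : ℕ) (hwrap3 : wrap3 =
      ((2 * a₁ % 2 ^ ℓ + 2 * a₂ % 2 ^ ℓ + 2 * a₃ % 2 ^ ℓ) / 2 ^ ℓ) % 2) :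
    MSB a ≡ MSB a₁ + MSB a₂ + MSB a₃ + wrap3 [MOD 2] ∧
    1 - MSB a = (MSB a₁ + MSB a₂ + MSB a₃ + wrap3 + 1) % 2 := by
  set H := 2 ^ (ℓ - 1) with hH
  have hHpos : 0 < H := Nat.pow_pos (by norm_num)
  have hL : 2 ^ ℓ = 2 * H := by
    rw [hH, ← pow_succ']
    congr 1
    omega
  -- 2 * aᵢ % 2^ℓ = 2 * (aᵢ % H)
  have key : ∀ x : ℕ, 2 * x % 2 ^ ℓ = 2 * (x % H) := fun x => by
    rw [hL, Nat.mul_mod_mul_left]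
  set r₁ := a₁ % H
  set r₂ := a₂ % H
  set r₃ := a₃ % H
  have hwrap3' : wrap3 = ((r₁ + r₂ + r₃) / H) % 2 := by
    rw [hwrap3, key, key, key, hL,
      show 2 * r₁ + 2 * r₂ + 2 * r₃ = 2 * (r₁ + r₂ + r₃) by ring,
      Nat.mul_div_mul_left _ H (by norm_num : (0:ℕ) < 2)]
  -- MSB a = (S / H) % 2
  have hMSBa : MSB a = ((a₁ + a₂ + a₃) / H) % 2 := by
    rw [hMSB, ha, hL, mul_comm 2 H, Nat.mod_mul_right_div_self]
  -- S / H = m₁ + m₂ + m₃ + (r₁+r₂+r₃)/H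
  have hsplit : (a₁ + a₂ + a₃) / H = a₁ / H + a₂ / H + a₃ / H + (r₁ + r₂ + r₃) / H := by
    have e1 : a₁ = H * (a₁ / H) + r₁ := (Nat.div_add_mod a₁ H).symm
    have e2 : a₂ = H * (a₂ / H) + r₂ := (Nat.div_add_mod a₂ H).symm
    have e3 : a₃ = H * (a₃ / H) + r₃ := (Nat.div_add_mod a₃ H).symm
    calc (a₁ + a₂ + a₃) / H
        = (r₁ + r₂ + r₃ + (a₁ / H + a₂ / H + a₃ / H) * H) / H := by
          congr 1; nlinarith [e1, e2, e3]
      _ = a₁ / H + a₂ / H + a₃ / H + (r₁ + r₂ + r₃) / H := by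
          rw [Nat.add_mul_div_right _ _ hHpos]; ring
  rw [hMSB a₁, hMSB a₂, hMSB a₃, hwrap3', hMSBa, hsplit]
  constructor
  · unfold Nat.ModEq
    omega
  · omega
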